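/- If a family A = {A_ij}_{i,j∈I} of complex matrices is normal in the coupled sense and is reducible in the coupled sense via subspaces {U_i}, then the orthogonal complements also satisfy A_ij(U_j^⊥) ⊆ U_i^⊥ for all i,j; in particular A is fully reducible in the coupled sense. -/

import Mathlib

open Matrix

/-- `A` is normal in the coupled sense: `A_ij* A_ij = A_ji A_ji*` for all `i, j`. -/
def CoupledNormal {I : Type*} {n : I → ℕ}
    (A : ∀ i j : I, Matrix (Fin (n i)) (Fin (n j)) ℂ) : Prop :=
  ∀ i j, (A i j)ᴴ * A i j = A j i * (A j i)ᴴ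

private lemma trace_herm {m l : Type*} [Fintype m] [Fintype l] (M : Matrix m l ℂ) :
    trace (Mᴴ * M) = ((∑ j, ∑ i, Complex.normSq (M i j) : ℝ) : ℂ) := by
  simp only [trace, diag, mul_apply, conjTranspose_apply]
  push_cast
  congr 1; ext j; congr 1; ext i
  rw [Complex.star_def, ← Complex.normSq_eq_conj_mul_self]

private lemma key {m l : Type*} [Fintype m] [Fintype l] [DecidableEq m] [DecidableEq l]
    (B : Matrix m l ℂ) (C : Matrix l m ℂ) (P : Matrix m m ℂ) (Q : Matrix l l ℂ)
    (hP : Pᴴ = P) (hQ : Qᴴ = Q) (hP2 : P * P = P) (hQ2 : Q * Q = Q)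
    (h1 : P * (B * Q) = B * Q) (h2 : Q * (C * P) = C * P)
    (hn1 : Bᴴ * B = C * Cᴴ) (hn2 : Cᴴ * C = B * Bᴴ) :
    Q * (Bᴴ * P) = Bᴴ * P := by
  have hBQ : P * B * Q = B * Q := by rw [Matrix.mul_assoc, h1]
  have hCP : Q * C * P = C * P := by rw [Matrix.mul_assoc, h2]
  set X : Matrix l m ℂ := Bᴴ * P - Q * (Bᴴ * P) with hX
  set Y : Matrix m l ℂ := Cᴴ * Q - P * (Cᴴ * Q) with hY
  have hXc : Xᴴ = P * B - P * B * Q := by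
    rw [hX]; simp [conjTranspose_sub, conjTranspose_mul, hP, hQ, Matrix.mul_assoc]
  have hYc : Yᴴ = Q * C - Q * C * P := by
    rw [hY]; simp [conjTranspose_sub, conjTranspose_mul, hP, hQ, Matrix.mul_assoc]
  have hXt : trace (Xᴴ * X) =
      trace (P * B * (Bᴴ * P)) - trace ((B * Q) * (Bᴴ * P)) := by
    rw [hXc, hX, Matrix.mul_sub, Matrix.sub_mul, Matrix.sub_mul]
    have e4 : P * B * Q * (Q * (Bᴴ * P)) = P * B * Q * (Bᴴ * P) := by
      rw [← Matrix.mul_assoc _ Q _, Matrix.mul_assoc (P * B) Q Q, hQ2]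
    have e2 : P * B * (Q * (Bᴴ * P)) = P * B * Q * (Bᴴ * P) := by
      rw [Matrix.mul_assoc (P * B) Q _]
    rw [e4, e2, trace_sub, trace_sub, hBQ, sub_self, trace_zero]
    ring
  have hYt : trace (Yᴴ * Y) =
      trace (Q * C * (Cᴴ * Q)) - trace ((C * P) * (Cᴴ * Q)) := by
    rw [hYc, hY, Matrix.mul_sub, Matrix.sub_mul, Matrix.sub_mul]
    have e4 : Q * C * P * (P * (Cᴴ * Q)) = Q * C * P * (Cᴴ * Q) := by
      rw [← Matrix.mul_assoc _ P _, Matrix.mul_assoc (Q * C) P P, hP2]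
    have e2 : Q * C * (P * (Cᴴ * Q)) = Q * C * P * (Cᴴ * Q) := by
      rw [Matrix.mul_assoc (Q * C) P _]
    rw [e4, e2, trace_sub, trace_sub, hCP, sub_self, trace_zero]
    ring
  have hβγ : trace ((B * Q) * (Bᴴ * P)) = trace (Q * C * (Cᴴ * Q)) := by
    rw [Matrix.trace_mul_comm, Matrix.mul_assoc Bᴴ P (B * Q), h1,
      ← Matrix.mul_assoc Bᴴ B Q, hn1]
    -- trace (C * Cᴴ * Q) = trace (Q * C * (Cᴴ * Q))
    rw [← Matrix.mul_assoc (Q * C) Cᴴ Q, Matrix.trace_mul_cycle (Q * C) Cᴴ Q,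
      ← Matrix.mul_assoc Q Q C, hQ2, Matrix.trace_mul_cycle C Cᴴ Q]
  have hδα : trace ((C * P) * (Cᴴ * Q)) = trace (P * B * (Bᴴ * P)) := by
    rw [Matrix.trace_mul_comm, Matrix.mul_assoc Cᴴ Q (C * P), h2,
      ← Matrix.mul_assoc Cᴴ C P, hn2]
    rw [← Matrix.mul_assoc (P * B) Bᴴ P, Matrix.trace_mul_cycle (P * B) Bᴴ P,
      ← Matrix.mul_assoc P P B, hP2, Matrix.trace_mul_cycle B Bᴴ P]
  have hsum : trace (Xᴴ * X) + trace (Yᴴ * Y) = 0 := by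
    rw [hXt, hYt, hβγ, hδα]; ring
  rw [trace_herm X, trace_herm Y, ← Complex.ofReal_add] at hsum
  have hsum' : (∑ j, ∑ i, Complex.normSq (X i j)) + (∑ j, ∑ i, Complex.normSq (Y i j)) = 0 := by
    exact_mod_cast hsum
  have hXnn : (0:ℝ) ≤ ∑ j, ∑ i, Complex.normSq (X i j) :=
    Finset.sum_nonneg fun _ _ => Finset.sum_nonneg fun _ _ => Complex.normSq_nonneg _
  have hYnn : (0:ℝ) ≤ ∑ j, ∑ i, Complex.normSq (Y i j) :=
    Finset.sum_nonneg fun _ _ => Finset.sum_nonneg fun _ _ => Complex.normSq_nonneg _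
  have hX0 : (∑ j, ∑ i, Complex.normSq (X i j)) = 0 := by linarith
  have : X = 0 := by
    ext i j
    have h := (Finset.sum_eq_zero_iff_of_nonneg
      (fun _ _ => Finset.sum_nonneg fun _ _ => Complex.normSq_nonneg _)).mp hX0 j
      (Finset.mem_univ _)
    have h' := (Finset.sum_eq_zero_iff_of_nonneg
      (fun _ _ => Complex.normSq_nonneg _)).mp h i (Finset.mem_univ _)
    simpa using Complex.normSq_eq_zero.mp h'
  have := sub_eq_zero.mp (hX ▸ this : Bᴴ * P - Q * (Bᴴ * P) = 0)
  exact this.symm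

private lemma toEuclideanLin_mul' {m l k : Type*} [Fintype m] [Fintype l] [Fintype k]
    [DecidableEq l] [DecidableEq k] (M : Matrix m l ℂ) (N : Matrix l k ℂ) :
    Matrix.toEuclideanLin (M * N) = (Matrix.toEuclideanLin M) ∘ₗ (Matrix.toEuclideanLin N) := by
  ext x
  simp [Matrix.toEuclideanLin_apply, Matrix.mulVec_mulVec]

/-- If a coupled-normal family `A` is reducible in the coupled sense via `{U i}`, then the
orthogonal complements are also coupled-invariant; in particular `A` is fully reducible
in the coupled sense (the complements also have some nonzero and some proper member). -/
theorem stmt_15 {I : Type*} {n : I → ℕ}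
    (A : ∀ i j : I, Matrix (Fin (n i)) (Fin (n j)) ℂ)
    (hN : CoupledNormal A)
    (U : ∀ i : I, Submodule ℂ (EuclideanSpace ℂ (Fin (n i))))
    (hU : ∀ i j, (U j).map (Matrix.toEuclideanLin (A i j)) ≤ U i)
    (hne_bot : ∃ i, U i ≠ ⊥) (hne_top : ∃ i, U i ≠ ⊤) :
    (∀ i j, (U j)ᗮ.map (Matrix.toEuclideanLin (A i j)) ≤ (U i)ᗮ) ∧
    (∃ i, (U i)ᗮ ≠ ⊥) ∧ (∃ i, (U i)ᗮ ≠ ⊤) := by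
  let p : ∀ k : I, EuclideanSpace ℂ (Fin (n k)) →ₗ[ℂ] EuclideanSpace ℂ (Fin (n k)) :=
    fun k => ((U k).subtypeL ∘L Submodule.orthogonalProjection (U k) : _ →L[ℂ] _)
  have p_mem : ∀ k x, p k x ∈ U k := fun k x => Submodule.coe_mem _
  have p_id : ∀ k, ∀ x ∈ U k, p k x = x := fun k x hx =>
    Submodule.starProjection_eq_self_iff.mpr hx
  let Pm : ∀ k : I, Matrix (Fin (n k)) (Fin (n k)) ℂ :=
    fun k => Matrix.toEuclideanLin.symm (p k)
  have pm_apply : ∀ k, Matrix.toEuclideanLin (Pm k) = p k := fun k =>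
    Matrix.toEuclideanLin.apply_symm_apply _
  have pm_herm : ∀ k, (Pm k)ᴴ = Pm k := by
    intro k
    apply Matrix.toEuclideanLin.injective
    rw [Matrix.toEuclideanLin_conjTranspose_eq_adjoint, pm_apply]
    symm
    rw [LinearMap.eq_adjoint_iff]
    exact Submodule.starProjection_isSymmetric (U k)
  have pm_idem : ∀ k, Pm k * Pm k = Pm k := by
    intro k
    apply Matrix.toEuclideanLin.injective
    rw [toEuclideanLin_mul', pm_apply]
    exact LinearMap.ext fun x => p_id k _ (p_mem k x)
  have pm_inv : ∀ i j, Pm i * (A i j * Pm j) = A i j * Pm j := by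
    intro i j
    apply Matrix.toEuclideanLin.injective
    rw [toEuclideanLin_mul', toEuclideanLin_mul', pm_apply, pm_apply]
    exact LinearMap.ext fun x => p_id i _ (hU i j ⟨p j x, p_mem j x, rfl⟩)
  have hadj : ∀ i j, ∀ y ∈ U i,
      LinearMap.adjoint (Matrix.toEuclideanLin (A i j)) y ∈ U j := by
    intro i j y hy
    have hkey : Pm j * ((A i j)ᴴ * Pm i) = (A i j)ᴴ * Pm i :=
      key (A i j) (A j i) (Pm i) (Pm j) (pm_herm i) (pm_herm j) (pm_idem i) (pm_idem j)
        (pm_inv i j) (pm_inv j i) (hN i j) (hN j i)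
    have e := congrArg Matrix.toEuclideanLin hkey
    rw [toEuclideanLin_mul', toEuclideanLin_mul',
      Matrix.toEuclideanLin_conjTranspose_eq_adjoint, pm_apply, pm_apply] at e
    have e' := LinearMap.congr_fun e y
    simp only [LinearMap.comp_apply] at e'
    rw [p_id i y hy] at e'
    rw [← e']
    exact p_mem j _
  refine ⟨?_, ?_, ?_⟩
  · rintro i j _ ⟨x, hx, rfl⟩
    rw [Submodule.mem_orthogonal]
    intro u hu
    rw [← LinearMap.adjoint_inner_left]
    exact (Submodule.mem_orthogonal _ x).mp hx _ (hadj i j u hu)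
  · obtain ⟨i, hi⟩ := hne_top
    exact ⟨i, fun h => hi (Submodule.orthogonal_eq_bot_iff.mp h)⟩
  · obtain ⟨i, hi⟩ := hne_bot
    refine ⟨i, fun h => hi ?_⟩
    have hle := Submodule.le_orthogonal_orthogonal (U i)
    rw [h, Submodule.top_orthogonal_eq_bot] at hle
    exact le_bot_iff.mp hle
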